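/- Let (ξ₁, ξ₂) be jointly normal with mean (πβ, π), covariance matrix Σ with entries σ₁², σ₁₂, σ₂² (Σ positive definite), and π > 0. Define β̂_U = τ̂(ξ₂)·(ξ₁ − (σ₁₂/σ₂²)ξ₂) + σ₁₂/σ₂², where τ̂(ξ₂) = (1/σ₂)·(1 − Φ(ξ₂/σ₂))/φ(ξ₂/σ₂). Then E[β̂_U] = β. -/

import Mathlib

open MeasureTheory ProbabilityTheory Filter Set
open scoped ENNReal NNReal

/-- Standard normal density `φ`. -/
noncomputable def stdPDF (x : ℝ) : ℝ :=
  (Real.sqrt (2 * Real.pi))⁻¹ * Real.exp (-(x ^ 2) / 2)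

/-- Standard normal CDF `Φ`. -/
noncomputable def stdCDF (x : ℝ) : ℝ := ∫ t in Set.Iic x, stdPDF t

/-- Mills-ratio estimator `τ̂(x, σ²) = (1/σ)(1 − Φ(x/σ))/φ(x/σ)`. -/
noncomputable def millsTau (σ x : ℝ) : ℝ :=
  (1 / σ) * (1 - stdCDF (x / σ)) / stdPDF (x / σ)


lemma stdPDF_eq (x : ℝ) :
    stdPDF x = (Real.sqrt (2 * Real.pi))⁻¹ * Real.exp (-(1/2) * x ^ 2) := by
  unfold stdPDF; rw [show -(x^2)/2 = -(1/2)*x^2 by ring]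

lemma stdPDF_pos (x : ℝ) : 0 < stdPDF x := by
  unfold stdPDF
  have h : 0 < Real.sqrt (2 * Real.pi) := Real.sqrt_pos.mpr (by positivity)
  positivity

lemma measurable_stdPDF : Measurable stdPDF := by
  unfold stdPDF; fun_prop

lemma stdPDF_eq' : stdPDF = fun x => (Real.sqrt (2 * Real.pi))⁻¹ * Real.exp (-(1/2) * x ^ 2) :=
  funext stdPDF_eq

lemma integrable_stdPDF : Integrable stdPDF := by
  rw [stdPDF_eq']
  exact (integrable_exp_neg_mul_sq (by norm_num : (0:ℝ) < 1/2)).const_mul _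

lemma integral_stdPDF : ∫ x, stdPDF x = 1 := by
  rw [stdPDF_eq']
  rw [integral_const_mul, integral_gaussian, show Real.pi / (1/2) = 2 * Real.pi by ring]
  exact inv_mul_cancel₀ (ne_of_gt (Real.sqrt_pos.mpr (by positivity)))

lemma stdCDF_mono : Monotone stdCDF := fun a b hab =>
  setIntegral_mono_set integrable_stdPDF.integrableOn
    (Filter.Eventually.of_forall fun x => (stdPDF_pos x).le)
    (HasSubset.Subset.eventuallyLE (Set.Iic_subset_Iic.mpr hab))

lemma measurable_stdCDF : Measurable stdCDF := stdCDF_mono.measurable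

lemma one_sub_stdCDF (x : ℝ) : 1 - stdCDF x = ∫ t in Ioi x, stdPDF t := by
  have h := intervalIntegral.integral_Iic_add_Ioi (b := x) (f := stdPDF) (μ := volume)
    integrable_stdPDF.integrableOn integrable_stdPDF.integrableOn
  rw [integral_stdPDF] at h
  unfold stdCDF
  linarith

lemma one_sub_stdCDF_nonneg (x : ℝ) : 0 ≤ 1 - stdCDF x := by
  rw [one_sub_stdCDF]
  exact setIntegral_nonneg measurableSet_Ioi fun t _ => (stdPDF_pos t).le

lemma gauss_mgf (c : ℝ) :
    Integrable (fun t => Real.exp (c * t) * stdPDF t) ∧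
      ∫ t, Real.exp (c * t) * stdPDF t = Real.exp (c ^ 2 / 2) := by
  have key : (fun t => Real.exp (c * t) * stdPDF t) =
      fun t => ((Real.sqrt (2 * Real.pi))⁻¹ * Real.exp (c ^ 2 / 2)) *
        Real.exp (-(1/2) * (t - c) ^ 2) := by
    funext t
    have h := Real.exp_add (c * t) (-(t ^ 2) / 2)
    rw [show c * t + -(t ^ 2) / 2 = c ^ 2 / 2 + -(1/2) * (t - c) ^ 2 by ring,
      Real.exp_add] at h
    unfold stdPDF
    linear_combination (Real.sqrt (2 * Real.pi))⁻¹ * h.symm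
  have hs : Real.sqrt (2 * Real.pi) ≠ 0 := ne_of_gt (Real.sqrt_pos.mpr (by positivity))
  constructor
  · rw [key]
    exact ((integrable_exp_neg_mul_sq (by norm_num : (0:ℝ) < 1/2)).comp_sub_right c).const_mul _
  · rw [key, integral_const_mul,
      integral_sub_right_eq_self (fun x => Real.exp (-(1/2) * x ^ 2)) c,
      integral_gaussian, show Real.pi / (1/2) = 2 * Real.pi by ring]
    field_simp

lemma exp_Iio {b : ℝ} (hb : 0 < b) (a : ℝ) :
    IntegrableOn (fun x => Real.exp (b * x)) (Iio a) ∧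
      ∫ x in Iio a, Real.exp (b * x) = Real.exp (b * a) / b := by
  have hres : (volume : Measure ℝ).restrict (Iio a) = volume.restrict (Iic a) :=
    Measure.restrict_congr_set Iio_ae_eq_Iic
  have hneg : IntegrableOn (fun x => Real.exp (-(b * x))) (Ioi (-a)) := by
    have := exp_neg_integrableOn_Ioi (-a) hb
    simpa [neg_mul] using this
  constructor
  · have hG : Integrable ((Ioi (-a)).indicator fun x => Real.exp (-(b * x))) := by
      rwa [integrable_indicator_iff measurableSet_Ioi]
    have hGn := hG.comp_neg
    have heq : (fun x => ((Ioi (-a)).indicator fun y => Real.exp (-(b * y))) (-x))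
        = (Iio a).indicator fun x => Real.exp (b * x) := by
      funext x
      by_cases hx : x < a
      · rw [Set.indicator_of_mem (show -x ∈ Ioi (-a) by simpa using hx),
          Set.indicator_of_mem (show x ∈ Iio a from hx)]
        ring_nf
      · rw [Set.indicator_of_notMem (show -x ∉ Ioi (-a) by simpa using hx),
          Set.indicator_of_notMem (show x ∉ Iio a from hx)]
    rw [heq] at hGn
    rwa [← integrable_indicator_iff measurableSet_Iio]
  · rw [hres]
    have h1 : (∫ x in Ioi (-a), (fun y => Real.exp (b * y)) (-x)) = ∫ x in Iic a, Real.exp (b * x) := by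
      simpa using integral_comp_neg_Ioi (c := -a) (f := fun y => Real.exp (b * y))
    have h2 : (∫ x in Ioi (-a), Real.exp (-(b * x))) = b⁻¹ • ∫ x in Ioi (b * (-a)), Real.exp (-x) :=
      integral_comp_mul_left_Ioi (fun y => Real.exp (-y)) (-a) hb
    rw [integral_exp_neg_Ioi] at h2
    rw [← h1]
    simp only [mul_neg, neg_mul] at h2 ⊢
    rw [h2, smul_eq_mul, neg_neg]
    ring

open ENNReal in
lemma core_integral {m : ℝ} (hm : 0 < m) :
    Integrable (fun z => Real.exp (m * z) * (1 - stdCDF (m + z))) ∧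
      ∫ z, Real.exp (m * z) * (1 - stdCDF (m + z)) = Real.exp (-(m ^ 2) / 2) / m := by
  set g : ℝ → ℝ := fun z => Real.exp (m * z) * (1 - stdCDF (m + z)) with hg
  set F : ℝ × ℝ → ℝ≥0∞ := fun p =>
    {q : ℝ × ℝ | m + q.1 < q.2}.indicator
      (fun q => ENNReal.ofReal (Real.exp (m * q.1) * stdPDF q.2)) p with hF
  have hmeas_g : Measurable g :=
    (Real.measurable_exp.comp (measurable_const.mul measurable_id)).mul
      (measurable_const.sub (measurable_stdCDF.comp (measurable_const.add measurable_id)))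
  have hg_nonneg : ∀ z, 0 ≤ g z := fun z =>
    mul_nonneg (Real.exp_nonneg _) (one_sub_stdCDF_nonneg _)
  have hFmeas : Measurable F := by
    apply Measurable.indicator
    · exact ((Real.measurable_exp.comp (measurable_const.mul measurable_fst)).mul
        (measurable_stdPDF.comp measurable_snd)).ennreal_ofReal
    · exact measurableSet_lt (measurable_const.add measurable_fst) measurable_snd
  have stepA : ∀ z, ∫⁻ t, F (z, t) = ENNReal.ofReal (g z) := by
    intro z
    have hid : ∀ t, F (z, t)
        = (Ioi (m + z)).indicator (fun t => ENNReal.ofReal (Real.exp (m * z) * stdPDF t)) t := by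
      intro t
      simp only [hF, Set.indicator_apply, Set.mem_setOf_eq, Set.mem_Ioi]
    calc ∫⁻ t, F (z, t)
        = ∫⁻ t in Ioi (m + z), ENNReal.ofReal (Real.exp (m * z) * stdPDF t) := by
          rw [lintegral_congr hid, lintegral_indicator measurableSet_Ioi]
      _ = ∫⁻ t in Ioi (m + z), ENNReal.ofReal (Real.exp (m * z)) * ENNReal.ofReal (stdPDF t) := by
          simp_rw [ENNReal.ofReal_mul (Real.exp_nonneg _)]
      _ = ENNReal.ofReal (Real.exp (m * z)) * ∫⁻ t in Ioi (m + z), ENNReal.ofReal (stdPDF t) :=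
          lintegral_const_mul' _ _ ENNReal.ofReal_ne_top
      _ = ENNReal.ofReal (Real.exp (m * z)) * ENNReal.ofReal (∫ t in Ioi (m + z), stdPDF t) := by
          rw [← ofReal_integral_eq_lintegral_ofReal integrable_stdPDF.integrableOn
            (Filter.Eventually.of_forall fun t => (stdPDF_pos t).le)]
      _ = ENNReal.ofReal (g z) := by
          rw [← ENNReal.ofReal_mul (Real.exp_nonneg _), hg]
          simp only
          rw [one_sub_stdCDF]
  have stepC : ∀ t, ∫⁻ z, F (z, t)
      = ENNReal.ofReal (Real.exp (m * t) * stdPDF t * (Real.exp (-(m ^ 2)) / m)) := by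
    intro t
    have hid : ∀ z, F (z, t)
        = (Iio (t - m)).indicator (fun z => ENNReal.ofReal (Real.exp (m * z) * stdPDF t)) z := by
      intro z
      rw [hF]
      simp only
      by_cases hzt : m + z < t
      · rw [Set.indicator_of_mem (show ((z, t) : ℝ × ℝ) ∈ {q : ℝ × ℝ | m + q.1 < q.2} from hzt),
          Set.indicator_of_mem (show z ∈ Iio (t - m) from by simp only [Set.mem_Iio]; linarith)]
      · rw [Set.indicator_of_notMem
            (show ((z, t) : ℝ × ℝ) ∉ {q : ℝ × ℝ | m + q.1 < q.2} from hzt),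
          Set.indicator_of_notMem (show z ∉ Iio (t - m) from by
            simp only [Set.mem_Iio]; intro h; exact hzt (by linarith))]
    calc ∫⁻ z, F (z, t)
        = ∫⁻ z in Iio (t - m), ENNReal.ofReal (Real.exp (m * z) * stdPDF t) := by
          rw [lintegral_congr hid, lintegral_indicator measurableSet_Iio]
      _ = ∫⁻ z in Iio (t - m), ENNReal.ofReal (Real.exp (m * z)) * ENNReal.ofReal (stdPDF t) := by
          simp_rw [ENNReal.ofReal_mul (Real.exp_nonneg _)]
      _ = (∫⁻ z in Iio (t - m), ENNReal.ofReal (Real.exp (m * z))) * ENNReal.ofReal (stdPDF t) :=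
          lintegral_mul_const' _ _ ENNReal.ofReal_ne_top
      _ = ENNReal.ofReal (Real.exp (m * (t - m)) / m) * ENNReal.ofReal (stdPDF t) := by
          rw [← ofReal_integral_eq_lintegral_ofReal (exp_Iio hm (t - m)).1
            (Filter.Eventually.of_forall fun z => Real.exp_nonneg _), (exp_Iio hm (t - m)).2]
      _ = ENNReal.ofReal (Real.exp (m * t) * stdPDF t * (Real.exp (-(m ^ 2)) / m)) := by
          rw [← ENNReal.ofReal_mul (by positivity)]
          congr 1
          rw [show m * (t - m) = m * t + -(m ^ 2) by ring, Real.exp_add]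
          ring
  have hswap : ∫⁻ z, ENNReal.ofReal (g z) = ENNReal.ofReal (Real.exp (-(m ^ 2) / 2) / m) := by
    have h1 : ∫⁻ z, ENNReal.ofReal (g z) = ∫⁻ z, ∫⁻ t, F (z, t) :=
      lintegral_congr fun z => (stepA z).symm
    rw [h1, lintegral_lintegral_swap (by exact hFmeas.aemeasurable), lintegral_congr stepC]
    have hint : Integrable (fun t => Real.exp (m * t) * stdPDF t * (Real.exp (-(m ^ 2)) / m)) :=
      (gauss_mgf m).1.mul_const _
    rw [← ofReal_integral_eq_lintegral_ofReal hint
      (Filter.Eventually.of_forall fun t =>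
        mul_nonneg (mul_nonneg (Real.exp_nonneg _) (stdPDF_pos t).le) (by positivity))]
    congr 1
    have hexp : Real.exp (m ^ 2 / 2) * Real.exp (-(m ^ 2)) = Real.exp (-(m ^ 2) / 2) := by
      rw [← Real.exp_add]; congr 1; ring
    rw [integral_mul_const, (gauss_mgf m).2, ← mul_div_assoc, hexp]
  have hfin : Integrable g := by
    refine ⟨hmeas_g.aestronglyMeasurable, ?_⟩
    rw [hasFiniteIntegral_iff_ofReal (Filter.Eventually.of_forall hg_nonneg), hswap]
    exact ENNReal.ofReal_lt_top
  refine ⟨hfin, ?_⟩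
  rw [integral_eq_lintegral_of_nonneg_ae (Filter.Eventually.of_forall hg_nonneg)
    hmeas_g.aestronglyMeasurable, hswap, ENNReal.toReal_ofReal (by positivity)]

lemma measurable_millsTau_comp {σ : ℝ} {u : ℝ → ℝ} (hu : Measurable u) :
    Measurable fun z => millsTau σ (u z) := by
  unfold millsTau
  exact ((measurable_const.mul
    (measurable_const.sub (measurable_stdCDF.comp (hu.div_const σ)))).div
    (measurable_stdPDF.comp (hu.div_const σ)))

lemma tau_int {p σ : ℝ} (hp : 0 < p) (hσ : 0 < σ) :
    Integrable (fun z => millsTau σ (p + σ * z) * stdPDF z) ∧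
      ∫ z, millsTau σ (p + σ * z) * stdPDF z = 1 / p := by
  have hm : 0 < p / σ := div_pos hp hσ
  have harg : ∀ z : ℝ, (p + σ * z) / σ = p / σ + z := by
    intro z; field_simp
  have hpdf : ∀ z : ℝ, stdPDF z = Real.exp (p / σ * z + (p / σ) ^ 2 / 2) * stdPDF (p / σ + z) := by
    intro z
    have h := Real.exp_add (p / σ * z + (p / σ) ^ 2 / 2) (-((p / σ + z) ^ 2) / 2)
    rw [show p / σ * z + (p / σ) ^ 2 / 2 + -((p / σ + z) ^ 2) / 2 = -(z ^ 2) / 2 by ring] at h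
    unfold stdPDF
    linear_combination (Real.sqrt (2 * Real.pi))⁻¹ * h
  have key : (fun z => millsTau σ (p + σ * z) * stdPDF z)
      = fun z => (Real.exp ((p / σ) ^ 2 / 2) / σ) *
        (Real.exp (p / σ * z) * (1 - stdCDF (p / σ + z))) := by
    funext z
    rw [millsTau, harg z, hpdf z, Real.exp_add]
    have hne : stdPDF (p / σ + z) ≠ 0 := ne_of_gt (stdPDF_pos _)
    generalize stdPDF (p / σ + z) = A at hne ⊢
    field_simp
  constructor
  · rw [key]; exact (core_integral hm).1.const_mul _
  · rw [key, integral_const_mul, (core_integral hm).2]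
    rw [div_mul_div_comm]
    rw [← Real.exp_add, show (p / σ) ^ 2 / 2 + -((p / σ) ^ 2) / 2 = 0 by ring, Real.exp_zero]
    rw [show σ * (p / σ) = p by field_simp]

lemma gaussianReal_std : gaussianReal 0 1
    = (volume : Measure ℝ).withDensity fun x => ((stdPDF x).toNNReal : ℝ≥0∞) := by
  rw [gaussianReal_of_var_ne_zero 0 one_ne_zero]
  congr 1
  funext x
  have hpdf : gaussianPDFReal 0 1 x = stdPDF x := by
    unfold gaussianPDFReal stdPDF
    norm_num
  show ENNReal.ofReal (gaussianPDFReal 0 1 x) = ((stdPDF x).toNNReal : ℝ≥0∞)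
  rw [hpdf]
  rfl

lemma integral_gaussianReal_std (f : ℝ → ℝ) :
    ∫ x, f x ∂(gaussianReal 0 1) = ∫ x, f x * stdPDF x := by
  rw [gaussianReal_std, integral_withDensity_eq_integral_smul measurable_stdPDF.real_toNNReal f]
  congr 1
  funext x
  rw [NNReal.smul_def, Real.coe_toNNReal _ (stdPDF_pos x).le, smul_eq_mul, mul_comm]

lemma integrable_gaussianReal_std (f : ℝ → ℝ) :
    Integrable f (gaussianReal 0 1) ↔ Integrable (fun x => f x * stdPDF x) := by
  rw [gaussianReal_std, integrable_withDensity_iff_integrable_smul measurable_stdPDF.real_toNNReal]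
  have : (fun x => Real.toNNReal (stdPDF x) • f x) = fun x => f x * stdPDF x := by
    funext x
    rw [NNReal.smul_def, Real.coe_toNNReal _ (stdPDF_pos x).le, smul_eq_mul, mul_comm]
  rw [this]

lemma id_gaussian_integrable : Integrable (fun x : ℝ => x) (gaussianReal 0 1) := by
  rw [integrable_gaussianReal_std]
  have hfun : (fun x : ℝ => x * stdPDF x)
      = fun x => (x * Real.exp (-(1/2) * x ^ 2)) * (Real.sqrt (2 * Real.pi))⁻¹ := by
    funext x; rw [stdPDF_eq]; ring
  rw [hfun]
  exact (integrable_mul_exp_neg_mul_sq (by norm_num : (0:ℝ) < 1/2)).mul_const _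

lemma id_gaussian_integral : ∫ x, x ∂(gaussianReal 0 1) = 0 := by
  rw [integral_gaussianReal_std]
  have hsymm : ∀ x : ℝ, stdPDF (-x) = stdPDF x := by
    intro x; unfold stdPDF; rw [neg_pow]; norm_num
  have h0 : ∫ x : ℝ, (fun y : ℝ => y * stdPDF y) (-x) = ∫ x : ℝ, x * stdPDF x :=
    integral_neg_eq_self (fun y : ℝ => y * stdPDF y) volume
  simp only [hsymm, neg_mul] at h0
  rw [integral_neg] at h0
  linarith

/-- Unbiasedness of β̂_U in the bivariate normal model with π > 0. -/
theorem stmt2 {Ω : Type*} [MeasurableSpace Ω] (P : Measure Ω) [IsProbabilityMeasure P]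
    (Z₁ Z₂ : Ω → ℝ) (hm₁ : Measurable Z₁) (hm₂ : Measurable Z₂)
    (hind : IndepFun Z₁ Z₂ P)
    (hZ₁ : P.map Z₁ = gaussianReal 0 1) (hZ₂ : P.map Z₂ = gaussianReal 0 1)
    (β π σ₁ σ₁₂ σ₂ : ℝ) (hπ : 0 < π) (hσ₂ : 0 < σ₂)
    (hpd : σ₁₂ ^ 2 < σ₁ ^ 2 * σ₂ ^ 2)
    (ξ₁ ξ₂ : Ω → ℝ)
    (hξ₂ : ξ₂ = fun ω => π + σ₂ * Z₂ ω)
    (hξ₁ : ξ₁ = fun ω => π * β + (σ₁₂ / σ₂) * Z₂ ω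
        + Real.sqrt (σ₁ ^ 2 - σ₁₂ ^ 2 / σ₂ ^ 2) * Z₁ ω) :
    ∫ ω, (millsTau σ₂ (ξ₂ ω) * (ξ₁ ω - (σ₁₂ / σ₂ ^ 2) * ξ₂ ω) + σ₁₂ / σ₂ ^ 2) ∂P
      = β := by
  subst hξ₁ hξ₂
  have hσ₂' : σ₂ ≠ 0 := ne_of_gt hσ₂
  set s : ℝ := Real.sqrt (σ₁ ^ 2 - σ₁₂ ^ 2 / σ₂ ^ 2) with hs
  set a : ℝ := π * β - π * (σ₁₂ / σ₂ ^ 2) with ha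
  set f : ℝ → ℝ := fun z => millsTau σ₂ (π + σ₂ * z) with hf
  have hfmeas : Measurable f :=
    measurable_millsTau_comp (measurable_const.add (measurable_const.mul measurable_id))
  have hf_γ : Integrable f (gaussianReal 0 1) := by
    rw [integrable_gaussianReal_std]
    exact (tau_int hπ hσ₂).1
  have hfZ₂ : Integrable (fun ω => f (Z₂ ω)) P := by
    have h := (integrable_map_measure
      (show AEStronglyMeasurable f (Measure.map Z₂ P) by
        rw [hZ₂]; exact hfmeas.aestronglyMeasurable) hm₂.aemeasurable).mp
      (by rw [hZ₂]; exact hf_γ)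
    exact h
  have hZ₁int : Integrable Z₁ P := by
    have h := (integrable_map_measure
      (show AEStronglyMeasurable (fun x : ℝ => x) (Measure.map Z₁ P) by
        rw [hZ₁]; exact measurable_id.aestronglyMeasurable) hm₁.aemeasurable).mp
      (by rw [hZ₁]; exact id_gaussian_integrable)
    exact h
  have hindep : IndepFun (fun ω => f (Z₂ ω)) Z₁ P := by
    have h := (hind.symm).comp hfmeas measurable_id
    exact h
  have hmul : Integrable (fun ω => f (Z₂ ω) * Z₁ ω) P := by
    have h := hindep.integrable_mul hfZ₂ hZ₁int
    exact h
  have hEf : ∫ ω, f (Z₂ ω) ∂P = 1 / π := by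
    have h := integral_map (φ := Z₂) (f := f) hm₂.aemeasurable
      (by rw [hZ₂]; exact hfmeas.aestronglyMeasurable)
    rw [hZ₂, integral_gaussianReal_std, (tau_int hπ hσ₂).2] at h
    exact h.symm
  have hEZ₁ : ∫ ω, Z₁ ω ∂P = 0 := by
    have h := integral_map (φ := Z₁) (f := fun x : ℝ => x) hm₁.aemeasurable
      (by rw [hZ₁]; exact measurable_id.aestronglyMeasurable)
    rw [hZ₁, id_gaussian_integral] at h
    exact h.symm
  have hEmul : ∫ ω, f (Z₂ ω) * Z₁ ω ∂P = 0 := by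
    have h := hindep.integral_mul_eq_mul_integral ((hfmeas.comp hm₂).aestronglyMeasurable)
      hm₁.aestronglyMeasurable
    calc ∫ ω, f (Z₂ ω) * Z₁ ω ∂P = (∫ ω, f (Z₂ ω) ∂P) * ∫ ω, Z₁ ω ∂P := h
      _ = 0 := by rw [hEZ₁, mul_zero]
  calc ∫ ω, (millsTau σ₂ ((fun ω => π + σ₂ * Z₂ ω) ω) *
        ((fun ω => π * β + σ₁₂ / σ₂ * Z₂ ω + s * Z₁ ω) ω
          - σ₁₂ / σ₂ ^ 2 * (fun ω => π + σ₂ * Z₂ ω) ω) + σ₁₂ / σ₂ ^ 2) ∂P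
      = ∫ ω, (a * f (Z₂ ω) + s * (f (Z₂ ω) * Z₁ ω) + σ₁₂ / σ₂ ^ 2) ∂P := by
        apply integral_congr_ae
        filter_upwards with ω
        rw [hf, ha]
        simp only
        generalize millsTau σ₂ (π + σ₂ * Z₂ ω) = T
        field_simp
        ring
    _ = (∫ ω, (a * f (Z₂ ω) + s * (f (Z₂ ω) * Z₁ ω)) ∂P) + ∫ _ω, σ₁₂ / σ₂ ^ 2 ∂P := by
        have h1 : Integrable (fun ω => a * f (Z₂ ω) + s * (f (Z₂ ω) * Z₁ ω)) P :=
          (hfZ₂.const_mul a).add (hmul.const_mul s)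
        rw [integral_add h1 (integrable_const _)]
    _ = a * (1 / π) + s * 0 + σ₁₂ / σ₂ ^ 2 := by
        have h2 : Integrable (fun ω => a * f (Z₂ ω)) P := hfZ₂.const_mul a
        have h3 : Integrable (fun ω => s * (f (Z₂ ω) * Z₁ ω)) P := hmul.const_mul s
        rw [integral_add h2 h3, integral_const_mul,
          integral_const_mul, hEf, hEmul, integral_const]
        simp [measure_univ]
    _ = β := by
        rw [ha]
        field_simp
        ring
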